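/- (q,b)-Cassini formula: F_{n-1}(x,qb,qs,q)·F_{n+1}(x,b,s,q) − F_n(x,b,s,q)·F_n(x,qb,qs,q) = (−1)^n·q^{n(n-1)/2}·s^{n-1}/((qb;q)_{n-1}·(q²b;q)_{n-1}) for all n ≥ 1, where F_n are the (q,b)-Fibonacci polynomials. -/

import Mathlib

open Finset

noncomputable section

/-- The field `ℚ(q,b,s,x)` of rational functions. -/
abbrev K : Type := FractionRing (MvPolynomial (Fin 4) ℚ)

def q : K := algebraMap (MvPolynomial (Fin 4) ℚ) K (MvPolynomial.X 0)
def b : K := algebraMap (MvPolynomial (Fin 4) ℚ) K (MvPolynomial.X 1)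
def s : K := algebraMap (MvPolynomial (Fin 4) ℚ) K (MvPolynomial.X 2)
def x : K := algebraMap (MvPolynomial (Fin 4) ℚ) K (MvPolynomial.X 3)

/-- The q-Pochhammer symbol `(a;q)_n = ∏_{j=0}^{n-1} (1 - q^j a)`. -/
def qPoch (a : K) (n : ℕ) : K := ∏ j ∈ range n, (1 - q ^ j * a)

/-- The (q,b)-Fibonacci polynomials `F n b s`, defined by `F 0 = 0`, `F 1 = 1` and the
parameter-shifting recursion (2.8). -/
def qbFib : ℕ → K → K → K
  | 0, _, _ => 0
  | 1, _, _ => 1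
  | (n + 2), b, s =>
      x * qbFib (n + 1) (q * b) (q * s) +
        (q * s / ((1 - q * b) * (1 - q ^ 2 * b))) * qbFib n (q ^ 2 * b) (q ^ 2 * s)

lemma qPoch_succ (a : K) (n : ℕ) : qPoch a (n+1) = (1 - a) * qPoch (q * a) n := by
  unfold qPoch
  rw [Finset.prod_range_succ', mul_comm]
  simp only [pow_zero, one_mul]
  congr 1
  exact Finset.prod_congr rfl fun j _ => by ring

lemma qPoch_shift_ne_zero (m : ℕ) (hm : 1 ≤ m) (B : K)
    (h : ∀ j, 1 ≤ j → 1 - q ^ j * B ≠ 0) (n : ℕ) : qPoch (q ^ m * B) n ≠ 0 := by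
  unfold qPoch
  rw [Finset.prod_ne_zero_iff]
  intro j _
  have := h (j + m) (by omega)
  rw [show q ^ j * (q ^ m * B) = q ^ (j + m) * B by rw [pow_add]; ring]
  exact this

lemma cassini_gen (k : ℕ) : ∀ B S : K, (∀ j, 1 ≤ j → 1 - q ^ j * B ≠ 0) →
    qbFib k (q * B) (q * S) * qbFib (k + 2) B S -
        qbFib (k + 1) B S * qbFib (k + 1) (q * B) (q * S) =
      (-1) ^ (k + 1) * q ^ ((k + 1) * k / 2) * S ^ k /
        (qPoch (q * B) k * qPoch (q ^ 2 * B) k) := by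
  induction k with
  | zero =>
    intro B S h
    simp [qbFib, qPoch]
  | succ k ih =>
    intro B S h
    have h' : ∀ j, 1 ≤ j → 1 - q ^ j * (q * B) ≠ 0 := by
      intro j hj
      have := h (j + 1) (by omega)
      rw [show q ^ j * (q * B) = q ^ (j + 1) * B by rw [pow_add]; ring]
      exact this
    have IH := ih (q * B) (q * S) h'
    rw [show q * (q * B) = q ^ 2 * B by ring, show q * (q * S) = q ^ 2 * S by ring,
      show q ^ 2 * (q * B) = q ^ 3 * B by ring] at IH
    have u1 : qbFib (k + 3) B S =
        x * qbFib (k + 2) (q * B) (q * S) +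
          (q * S / ((1 - q * B) * (1 - q ^ 2 * B))) * qbFib (k + 1) (q ^ 2 * B) (q ^ 2 * S) := rfl
    have u2 : qbFib (k + 2) B S =
        x * qbFib (k + 1) (q * B) (q * S) +
          (q * S / ((1 - q * B) * (1 - q ^ 2 * B))) * qbFib k (q ^ 2 * B) (q ^ 2 * S) := rfl
    have key : qbFib (k + 1) (q * B) (q * S) * qbFib (k + 1 + 2) B S -
        qbFib (k + 1 + 1) B S * qbFib (k + 1 + 1) (q * B) (q * S) =
        -(q * S / ((1 - q * B) * (1 - q ^ 2 * B))) *
          (qbFib k (q ^ 2 * B) (q ^ 2 * S) * qbFib (k + 2) (q * B) (q * S) -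
            qbFib (k + 1) (q * B) (q * S) * qbFib (k + 1) (q ^ 2 * B) (q ^ 2 * S)) := by
      rw [show k + 1 + 2 = k + 3 from rfl, u1, u2]
      ring
    rw [key, IH]
    have h1 : (1 : K) - q * B ≠ 0 := by have := h 1 le_rfl; rwa [pow_one] at this
    have h2 : (1 : K) - q ^ 2 * B ≠ 0 := h 2 (by omega)
    have p2 : qPoch (q ^ 2 * B) k ≠ 0 := qPoch_shift_ne_zero 2 (by omega) B h k
    have p3 : qPoch (q ^ 3 * B) k ≠ 0 := qPoch_shift_ne_zero 3 (by omega) B h k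
    have e1 : qPoch (q * B) (k + 1) = (1 - q * B) * qPoch (q ^ 2 * B) k := by
      rw [qPoch_succ, show q * (q * B) = q ^ 2 * B by ring]
    have e2 : qPoch (q ^ 2 * B) (k + 1) = (1 - q ^ 2 * B) * qPoch (q ^ 3 * B) k := by
      rw [qPoch_succ, show q * (q ^ 2 * B) = q ^ 3 * B by ring]
    rw [e1, e2]
    have hexp : (k + 1 + 1) * (k + 1) / 2 = (k + 1) * k / 2 + (k + 1) := by
      rw [show (k + 1 + 1) * (k + 1) = (k + 1) * k + 2 * (k + 1) by ring,
        Nat.add_mul_div_left _ _ (by norm_num : 0 < 2)]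
    rw [hexp, pow_add]
    field_simp
    ring

/-- (q,b)-Cassini formula. -/
theorem qbFib_cassini (n : ℕ) (hn : 1 ≤ n) :
    qbFib (n - 1) (q * b) (q * s) * qbFib (n + 1) b s -
        qbFib n b s * qbFib n (q * b) (q * s) =
      (-1) ^ n * q ^ (n * (n - 1) / 2) * s ^ (n - 1) /
        (qPoch (q * b) (n - 1) * qPoch (q ^ 2 * b) (n - 1)) := by
  obtain ⟨k, rfl⟩ : ∃ k, n = k + 1 := ⟨n - 1, by omega⟩
  have hb : ∀ j, 1 ≤ j → 1 - q ^ j * b ≠ 0 := by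
    intro j hj heq
    have h1 : (1 : K) - q ^ j * b =
        algebraMap (MvPolynomial (Fin 4) ℚ) K (1 - (MvPolynomial.X 0) ^ j * MvPolynomial.X 1) := by
      simp [q, b, map_sub, map_mul, map_pow]
    rw [h1] at heq
    have h2 : (1 - (MvPolynomial.X (0 : Fin 4) : MvPolynomial (Fin 4) ℚ) ^ j *
        MvPolynomial.X 1) = 0 := by
      apply IsFractionRing.injective (MvPolynomial (Fin 4) ℚ) K
      simpa using heq
    have h3 := congrArg (MvPolynomial.eval (fun _ => (0 : ℚ))) h2
    simp at h3
  simp only [Nat.add_sub_cancel]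
  exact cassini_gen k b s hb

end
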